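/- Let (R,B) be a ℤ-based rng, let E₁ and E₂ be modules over R_ℂ := ℂ ⊗_ℤ R, and let h : E₁ → E₂ be a ℂ-linear map. Then the map h₀ : E₁ → E₂ defined by h₀(w) = Σ_{i=0}^{n−1} b_i · h(~b_i · w) is a homomorphism of R_ℂ-modules. -/

import Mathlib

open scoped BigOperators

/-- Let `(R,B)` be a `ℤ`-based rng, `E₁, E₂` modules over
`R_ℂ` and `h : E₁ → E₂` a `ℂ`-linear map.  Then
`h₀ : w ↦ ∑ i, b i • h (~b i • w)` is a homomorphism of `R_ℂ`-modules. -/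
theorem zBasedRng_averaged_map_is_module_hom
    {n : ℕ} (A : Type*) [CommRing A] [Algebra ℂ A]
    (b : Module.Basis (Fin n) ℂ A) (N : Fin n → Fin n → Fin n → ℤ) (σ : Fin n → Fin n)
    (hmul : ∀ i j, b i * b j = ∑ m, (N i j m : ℂ) • b m)
    (hσ : ∀ i, σ (σ i) = i)
    (hσN : ∀ i j m, N (σ i) (σ j) m = N i j (σ m))
    (hτ : ∀ i j, (∑ m, (starRingEnd ℂ) (b.repr 1 m) * (N (σ i) j m : ℂ)) =
      if i = j then (1 : ℂ) else 0)
    (he : ∀ j, (starRingEnd ℂ) (b.repr 1 (σ j)) = b.repr 1 j)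
    (E₁ E₂ : Type*) [AddCommGroup E₁] [AddCommGroup E₂]
    [Module ℂ E₁] [Module ℂ E₂] [Module A E₁] [Module A E₂]
    [IsScalarTower ℂ A E₁] [IsScalarTower ℂ A E₂]
    (h : E₁ →ₗ[ℂ] E₂) :
    ∃ h₀ : E₁ →ₗ[A] E₂, ∀ w : E₁, h₀ w = ∑ i, b i • h (b (σ i) • w) := by
  classical
  -- τ functional
  set τ : A →ₗ[ℂ] ℂ := ∑ p, (starRingEnd ℂ) (b.repr 1 p) • (b.coord p) with hτdef
  have hτb : ∀ m, τ (b m) = (starRingEnd ℂ) (b.repr 1 m) := by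
    intro m
    simp [hτdef, LinearMap.sum_apply, Module.Basis.coord_apply, Module.Basis.repr_self,
      Finsupp.single_apply]
  have hτmul : ∀ u v, τ (b (σ u) * b v) = if u = v then 1 else 0 := by
    intro u v
    rw [hmul, map_sum, ← hτ u v]
    refine Finset.sum_congr rfl fun m _ => ?_
    rw [map_smul, hτb, smul_eq_mul, mul_comm]
  have hτmul' : ∀ m k, τ (b m * b k) = if σ m = k then 1 else 0 := by
    intro m k
    have := hτmul (σ m) k
    rwa [hσ] at this
  have key : ∀ i j k, (N j k i : ℂ) = N (σ i) j (σ k) := by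
    intro i j k
    have e1 : τ (b (σ i) * (b j * b k)) = (N j k i : ℂ) := by
      rw [hmul j k, Finset.mul_sum]
      simp only [mul_smul_comm, map_sum, map_smul, hτmul, smul_eq_mul,
        mul_ite, mul_one, mul_zero]
      simp
    have e2 : τ ((b (σ i) * b j) * b k) = (N (σ i) j (σ k) : ℂ) := by
      rw [hmul (σ i) j, Finset.sum_mul]
      simp only [smul_mul_assoc, map_sum, map_smul, hτmul', smul_eq_mul,
        mul_ite, mul_one, mul_zero]
      have hiff : ∀ x : Fin n, (σ x = k) = (x = σ k) := fun x =>
        propext ⟨fun hx => by rw [← hx, hσ], fun hx => by rw [hx, hσ]⟩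
      simp only [hiff]
      rw [Finset.sum_ite_eq' Finset.univ (σ k)]
      simp
    rw [← e1, ← mul_assoc, e2]
  have key' : ∀ i j m, (N (σ i) j m : ℂ) = (N j (σ m) i : ℂ) := by
    intro i j m
    rw [key i j (σ m), hσ]
  -- the ℂ-linear version of the averaged map
  have hFsmulC : ∀ (c : ℂ) (w : E₁),
      (∑ i, b i • h (b (σ i) • (c • w))) = c • ∑ i, b i • h (b (σ i) • w) := by
    intro c w
    rw [Finset.smul_sum]
    refine Finset.sum_congr rfl fun i _ => ?_
    rw [smul_comm (b (σ i)) c, map_smul, smul_comm]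
  set F : E₁ →ₗ[ℂ] E₂ :=
    { toFun := fun w => ∑ i, b i • h (b (σ i) • w)
      map_add' := by
        intro x y
        simp [smul_add, map_add, Finset.sum_add_distrib]
      map_smul' := hFsmulC } with hFdef
  have hbasis : ∀ (j : Fin n) (w : E₁), F (b j • w) = b j • F w := by
    intro j w
    have L : F (b j • w) = ∑ i, ∑ m, (N (σ i) j m : ℂ) • (b i • h (b m • w)) := by
      simp only [hFdef, LinearMap.coe_mk, AddHom.coe_mk]
      refine Finset.sum_congr rfl fun i _ => ?_
      rw [smul_smul, hmul (σ i) j, Finset.sum_smul]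
      simp only [smul_assoc, map_sum, map_smul, Finset.smul_sum]
      refine Finset.sum_congr rfl fun m _ => ?_
      rw [smul_comm]
    have R : b j • F w = ∑ i, ∑ m, (N j (σ i) m : ℂ) • (b m • h (b i • w)) := by
      simp only [hFdef, LinearMap.coe_mk, AddHom.coe_mk, Finset.smul_sum]
      have step : ∀ i, b j • (b i • h (b (σ i) • w)) =
          ∑ m, (N j i m : ℂ) • (b m • h (b (σ i) • w)) := by
        intro i
        rw [smul_smul, hmul j i, Finset.sum_smul]
        simp only [smul_assoc]
      rw [Finset.sum_congr rfl fun i _ => step i]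
      -- reindex i ↦ σ i
      rw [← Equiv.sum_comp (Function.Involutive.toPerm σ hσ)
        (fun i => ∑ m, (N j (σ i) m : ℂ) • (b m • h (b i • w)))]
      refine Finset.sum_congr rfl fun i _ => ?_
      simp [Function.Involutive.toPerm, hσ]
    rw [L, R, Finset.sum_comm]
    refine Finset.sum_congr rfl fun i _ => Finset.sum_congr rfl fun m _ => ?_
    rw [key' m j i]
  have hA : ∀ (a : A) (w : E₁), F (a • w) = a • F w := by
    intro a w
    calc F (a • w) = F ((∑ j, b.repr a j • b j) • w) := by rw [b.sum_repr]
      _ = ∑ j, b.repr a j • F (b j • w) := by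
          rw [Finset.sum_smul]
          simp only [smul_assoc, map_sum, map_smul]
      _ = ∑ j, b.repr a j • (b j • F w) := by
          exact Finset.sum_congr rfl fun j _ => by rw [hbasis]
      _ = (∑ j, b.repr a j • b j) • F w := by
          rw [Finset.sum_smul]
          simp only [smul_assoc]
      _ = a • F w := by rw [b.sum_repr]
  exact ⟨{ toFun := F, map_add' := F.map_add, map_smul' := hA }, fun w => rfl⟩
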